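/- Let G be an infinite locally-finite graph with two disjoint induced rays P and Q in the same end such that G has no edges between P and Q, and let J_1 be a finite tie of P ∪ Q. Then only finitely many finite ties of P ∪ Q cross J_1. -/

import Mathlib

variable {V : Type*}

/-- `r` is an induced ray in `G`. -/
def IsInducedRay (G : SimpleGraph V) (r : ℕ → V) : Prop :=
  Function.Injective r ∧ ∀ i j, G.Adj (r i) (r j) ↔ (i = j + 1 ∨ j = i + 1)

/-- The two rays `p` and `q` lie in the same end of `G`: there are infinitely many
pairwise-disjoint paths joining them. -/
def SameEnd (G : SimpleGraph V) (p q : ℕ → V) : Prop :=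
  ∃ (a b : ℕ → ℕ) (P : ∀ n, G.Walk (p (a n)) (q (b n))),
    (∀ n, (P n).IsPath) ∧
    ∀ m n, m ≠ n → ∀ v, v ∈ (P m).support → v ∈ (P n).support → False

/-- `{x,y}` is an edge of the ray `p`. -/
def RailEdge (p : ℕ → V) (x y : V) : Prop :=
  ∃ i, (x = p i ∧ y = p (i + 1)) ∨ (x = p (i + 1) ∧ y = p i)

/-- The graph `G` minus the edges of the two rays `p` and `q`. -/
def tieGraph (G : SimpleGraph V) (p q : ℕ → V) : SimpleGraph V where
  Adj x y := G.Adj x y ∧ ¬ RailEdge p x y ∧ ¬ RailEdge q x y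
  symm := ⟨by
    rintro x y ⟨h1, h2, h3⟩
    refine ⟨h1.symm, fun ⟨i, hi⟩ => h2 ⟨i, ?_⟩, fun ⟨i, hi⟩ => h3 ⟨i, ?_⟩⟩ <;> tauto⟩
  loopless := ⟨fun x h => G.loopless.irrefl x h.1⟩

/-- `J` is a tie of `P ∪ Q` in `G`: a connected component of `G` minus the edges
of `p` and `q` that meets both rays. -/
def IsTie (G : SimpleGraph V) (p q : ℕ → V) (J : Set V) : Prop :=
  ((tieGraph G p q).induce J).Connected ∧
    (∀ x ∈ J, ∀ y, (tieGraph G p q).Adj x y → y ∈ J) ∧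
    (∃ i, p i ∈ J) ∧ (∃ j, q j ∈ J)

/-- Attachment positions of the tie `J` on the ray `p`. -/
def attOn (p : ℕ → V) (J : Set V) : Set ℕ := {i | p i ∈ J}

/-- Two finite ties cross: with spans `P[pl_i, pr_i]`, `Q[ql_i, qr_i]` given by the
least/greatest attachments, either `qr₁ < ql₂` and `pr₂ < pl₁`, or
`pr₁ < pl₂` and `qr₂ < ql₁`. -/
def TiesCross (p q : ℕ → V) (J1 J2 : Set V) : Prop :=
  (sSup (attOn q J1) < sInf (attOn q J2) ∧ sSup (attOn p J2) < sInf (attOn p J1)) ∨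
  (sSup (attOn p J1) < sInf (attOn p J2) ∧ sSup (attOn q J2) < sInf (attOn q J1))


lemma tie_subset {G : SimpleGraph V} {p q : ℕ → V} {A B : Set V}
    (hA : IsTie G p q A) (hB : IsTie G p q B) {v : V} (hvA : v ∈ A) (hvB : v ∈ B) :
    A ⊆ B := by
  intro x hx
  obtain ⟨w⟩ := hA.1.preconnected ⟨v, hvA⟩ ⟨x, hx⟩
  have : ∀ (a b : A) (w : ((tieGraph G p q).induce A).Walk a b), (a : V) ∈ B → (b : V) ∈ B := by
    intro a b w
    induction w with
    | nil => exact id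
    | cons h w ih =>
      intro ha
      exact ih (hB.2.1 _ ha _ h)
  exact this _ _ w hvB

lemma tie_eq {G : SimpleGraph V} {p q : ℕ → V} {A B : Set V}
    (hA : IsTie G p q A) (hB : IsTie G p q B) {v : V} (hvA : v ∈ A) (hvB : v ∈ B) :
    A = B :=
  (tie_subset hA hB hvA hvB).antisymm (tie_subset hB hA hvB hvA)

/-- In an infinite locally-finite graph with two disjoint induced rays `P`, `Q` in
the same end and no edges between them, any finite tie `J₁` of `P ∪ Q` is crossed
by only finitely many finite ties. -/
theorem finitely_many_crossing_ties [Infinite V] (G : SimpleGraph V)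
    (hlf : ∀ v : V, (G.neighborSet v).Finite)
    (p q : ℕ → V) (hp : IsInducedRay G p) (hq : IsInducedRay G q)
    (hdisj : ∀ i j, p i ≠ q j) (hend : SameEnd G p q)
    (hnoedge : ∀ i j, ¬ G.Adj (p i) (q j))
    (J1 : Set V) (hJ1 : IsTie G p q J1) (hfin : J1.Finite) :
    {J : Set V | IsTie G p q J ∧ J.Finite ∧ TiesCross p q J J1}.Finite := by
  classical
  have : Nonempty V := inferInstance
  set c1 := sInf (attOn q J1)
  set c2 := sInf (attOn p J1)
  set T : Set V := q '' Set.Iio c1 ∪ p '' Set.Iio c2 with hT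
  have hTfin : T.Finite := ((Set.finite_Iio c1).image q).union ((Set.finite_Iio c2).image p)
  set S := {J : Set V | IsTie G p q J ∧ J.Finite ∧ TiesCross p q J J1} with hS
  have hex : ∀ J ∈ S, (J ∩ T).Nonempty := by
    rintro J ⟨hJ, hJfin, hcross⟩
    rcases hcross with ⟨h1, h2⟩ | ⟨h1, h2⟩
    · obtain ⟨j, hj⟩ := hJ.2.2.2
      have hfinq : (attOn q J).Finite := Set.Finite.preimage (hq.1.injOn) hJfin
      have : j ≤ sSup (attOn q J) := le_csSup hfinq.bddAbove hj
      exact ⟨q j, hj, Or.inl ⟨j, lt_of_le_of_lt this h1, rfl⟩⟩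
    · obtain ⟨i, hi⟩ := hJ.2.2.1
      have hfinp : (attOn p J).Finite := Set.Finite.preimage (hp.1.injOn) hJfin
      have : i ≤ sSup (attOn p J) := le_csSup hfinp.bddAbove hi
      exact ⟨p i, hi, Or.inr ⟨i, lt_of_le_of_lt this h1, rfl⟩⟩
  set f : Set V → V := fun J => if h : (J ∩ T).Nonempty then h.choose else Classical.arbitrary V
    with hf
  have hmem : ∀ J ∈ S, f J ∈ J ∩ T := by
    intro J hJ
    have h := hex J hJ
    simp only [hf, dif_pos h]
    exact h.choose_spec
  apply Set.Finite.of_finite_image (f := f)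
  · exact hTfin.subset (by rintro _ ⟨J, hJ, rfl⟩; exact (hmem J hJ).2)
  · intro A hA B hB hfeq
    exact tie_eq hA.1 hB.1 (hmem A hA).1 (hfeq ▸ (hmem B hB).1)
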